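/- Let n, p, d, m be positive integers; let A be n×n, C be p×n, D be n×d, B be n×m, and Ẑ be n×p real matrices; let Ŷ ≻ 0 be a symmetric n×n matrix, Ē a symmetric n×n matrix, and let W (d×d), V (p×p), Γ_w (m×m), Γ_v (p×p) be symmetric positive definite matrices. Define B̂ = Ŷ⁻¹Ẑ and E = Ŷ⁻¹. Then the following two conditions are equivalent: (i) the block matrix [[Ē, I], [I, Ŷ]] is positive definite AND the symmetric 6×6 block matrix with upper-triangular blocks given by row 1: [Ŷ, ŶA − ẐC, ŶD, ŶB, Ẑ, Ẑ], row 2: [Ŷ, 0, 0, 0, 0], row 3: [W⁻¹, 0, 0, 0], row 4: [Γ_w, 0, 0], row 5: [V⁻¹, 0], row 6: [Γ_v] is positive definite; (ii) E ≺ Ē AND (A − B̂C)E(A − B̂C)ᵀ + DWDᵀ + BΓ_w⁻¹Bᵀ + B̂VB̂ᵀ + B̂Γ_v⁻¹B̂ᵀ ≺ E. -/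

import Mathlib

open Matrix

section Aux

variable {m n : Type*} [Fintype m] [Fintype n] [DecidableEq m] [DecidableEq n]

/-- Schur complement criterion for positive definiteness of a block matrix (real case),
taking the Schur complement with respect to the (2,2) block. -/
theorem posDef_fromBlocks₂₂'
    (A : Matrix m m ℝ) (B : Matrix m n ℝ) {D : Matrix n n ℝ} (hD : D.PosDef) :
    (fromBlocks A B Bᵀ D).PosDef ↔ (A - B * D⁻¹ * Bᵀ).PosDef := by
  letI := hD.isUnit.invertible
  have hBt : (Bᵀ : Matrix n m ℝ) = Bᴴ := (conjTranspose_eq_transpose_of_trivial B).symm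
  rw [hBt]
  simp only [posDef_iff_dotProduct_mulVec]
  constructor
  · rintro ⟨h1, h2⟩
    refine ⟨(IsHermitian.fromBlocks₂₂ A B hD.1).mp h1, fun x hx => ?_⟩
    have hv : (x ⊕ᵥ (-((D⁻¹ * Bᴴ) *ᵥ x))) ≠ 0 := by
      intro h
      exact hx (funext fun i => congrFun h (Sum.inl i))
    have hq := h2 hv
    rw [dotProduct_mulVec, schur_complement_eq₂₂ A B _ _ hD.1, add_neg_cancel] at hq
    simpa [dotProduct_mulVec] using hq
  · rintro ⟨h1, h2⟩
    refine ⟨(IsHermitian.fromBlocks₂₂ A B hD.1).mpr h1, fun x hx => ?_⟩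
    rw [dotProduct_mulVec, ← Sum.elim_comp_inl_inr x, schur_complement_eq₂₂ A B _ _ hD.1]
    by_cases h0 : x ∘ Sum.inl = 0
    · have h2nz : x ∘ Sum.inr ≠ 0 := by
        intro h
        apply hx
        rw [← Sum.elim_comp_inl_inr x, h0, h]
        ext (i | i) <;> rfl
      rw [h0]
      have hDq := hD.dotProduct_mulVec_pos h2nz
      simp only [mulVec_zero, zero_add, star_zero, zero_vecMul, zero_dotProduct, add_zero]
      rw [dotProduct_mulVec] at hDq
      exact hDq
    · have hS := h2 h0
      rw [dotProduct_mulVec] at hS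
      refine add_pos_of_nonneg_of_pos ?_ hS
      rw [← dotProduct_mulVec]
      exact hD.posSemidef.dotProduct_mulVec_nonneg _

/-- A block diagonal matrix with positive definite diagonal blocks is positive definite. -/
theorem posDef_fromBlocks_diag {A : Matrix m m ℝ} {D : Matrix n n ℝ}
    (hA : A.PosDef) (hD : D.PosDef) : (fromBlocks A 0 0 D).PosDef := by
  have h : (fromBlocks A 0 0 D) = fromBlocks A 0 (0 : Matrix m n ℝ)ᵀ D := by
    rw [transpose_zero]
  rw [h, posDef_fromBlocks₂₂' _ _ hD]
  simpa using hA

/-- Inverse of a block diagonal matrix with invertible diagonal blocks. -/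
theorem inv_fromBlocks_diag {A : Matrix m m ℝ} {D : Matrix n n ℝ}
    (hA : IsUnit A) (hD : IsUnit D) :
    (fromBlocks A 0 0 D)⁻¹ = fromBlocks A⁻¹ 0 0 D⁻¹ := by
  rw [inv_fromBlocks_zero₂₁_of_isUnit_iff A 0 D (iff_of_true hA hD)]
  simp

/-- Congruence preserves positive definiteness (real case). -/
theorem posDef_mul_mul_transpose_iff {M N : Matrix n n ℝ} (hN : IsUnit N) :
    (N * M * Nᵀ).PosDef ↔ M.PosDef := by
  have key : ∀ (M N : Matrix n n ℝ), IsUnit N → M.PosDef → (N * M * Nᵀ).PosDef := by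
    intro M N hN hM
    rw [posDef_iff_dotProduct_mulVec]
    constructor
    · have hMt : Mᵀ = M := by
        have h := hM.1.eq
        rwa [conjTranspose_eq_transpose_of_trivial] at h
      show (N * M * Nᵀ)ᴴ = N * M * Nᵀ
      rw [conjTranspose_eq_transpose_of_trivial, transpose_mul, transpose_mul,
        transpose_transpose, hMt, Matrix.mul_assoc]
    · intro x hx
      have hNt : IsUnit Nᵀ := (isUnit_iff_isUnit_det _).mpr
        (by rw [det_transpose]; exact (isUnit_iff_isUnit_det N).mp hN)
      have hy : Nᵀ *ᵥ x ≠ 0 := by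
        have hinj : Function.Injective (Nᵀ).mulVec :=
          (mulVec_injective_iff_isUnit).mpr hNt
        intro h
        exact hx (hinj (by simpa using h))
      have hlt := hM.dotProduct_mulVec_pos hy
      calc (0 : ℝ) < star (Nᵀ *ᵥ x) ⬝ᵥ (M *ᵥ (Nᵀ *ᵥ x)) := hlt
        _ = star x ⬝ᵥ ((N * M * Nᵀ) *ᵥ x) := by
            rw [star_mulVec, mulVec_mulVec, dotProduct_mulVec, vecMul_vecMul,
              dotProduct_mulVec,
              show Nᵀᴴ * (M * Nᵀ) = N * M * Nᵀ from by
                rw [conjTranspose_eq_transpose_of_trivial, transpose_transpose,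
                  Matrix.mul_assoc]]
  constructor
  · intro h
    have h2 := key _ N⁻¹ (isUnit_nonsing_inv_iff.mpr hN) h
    have : N⁻¹ * (N * M * Nᵀ) * N⁻¹ᵀ = M := by
      rw [transpose_nonsing_inv]
      have h1 : N⁻¹ * N = 1 := nonsing_inv_mul N (isUnit_iff_isUnit_det N |>.mp hN)
      have h2' : Nᵀ * Nᵀ⁻¹ = 1 :=
        mul_nonsing_inv Nᵀ (by rw [det_transpose]; exact isUnit_iff_isUnit_det N |>.mp hN)
      rw [Matrix.mul_assoc, Matrix.mul_assoc, Matrix.mul_assoc, h2', Matrix.mul_one,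
        ← Matrix.mul_assoc, h1, Matrix.one_mul]
    rwa [this] at h2
  · exact key M N hN

end Aux

/-- Corollary 1: estimator design for an unstable system with estimator gain
`B̂ = Ŷ⁻¹Ẑ`, error covariance bound `Ē`, process noise covariance `W`,
input privacy noise covariance `Γ_w⁻¹`, measurement noise covariance `V`,
and output privacy noise covariance `Γ_v⁻¹`. -/
theorem corollary1_estimator_lmi
    (n p d m : ℕ) (hn : 0 < n) (hp : 0 < p) (hd : 0 < d) (hm : 0 < m)
    (A : Matrix (Fin n) (Fin n) ℝ) (C : Matrix (Fin p) (Fin n) ℝ)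
    (D : Matrix (Fin n) (Fin d) ℝ) (B : Matrix (Fin n) (Fin m) ℝ)
    (Zhat : Matrix (Fin n) (Fin p) ℝ)
    (Yhat : Matrix (Fin n) (Fin n) ℝ) (hYhat : Yhat.PosDef)
    (Ebar : Matrix (Fin n) (Fin n) ℝ) (hEbar : Ebar.IsHermitian)
    (W : Matrix (Fin d) (Fin d) ℝ) (V : Matrix (Fin p) (Fin p) ℝ)
    (Gw : Matrix (Fin m) (Fin m) ℝ) (Gv : Matrix (Fin p) (Fin p) ℝ)
    (hW : W.PosDef) (hV : V.PosDef) (hGw : Gw.PosDef) (hGv : Gv.PosDef)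
    (Bhat : Matrix (Fin n) (Fin p) ℝ) (E : Matrix (Fin n) (Fin n) ℝ)
    (hBhatdef : Bhat = Yhat⁻¹ * Zhat) (hEdef : E = Yhat⁻¹) :
    ((fromBlocks Ebar 1 1 Yhat).PosDef ∧
      (fromBlocks
        (fromBlocks
          (fromBlocks Yhat (Yhat * A - Zhat * C) (Yhat * A - Zhat * C)ᵀ Yhat)
          (fromBlocks (Yhat * D) (Yhat * B) 0 0)
          (fromBlocks (Yhat * D) (Yhat * B) 0 0)ᵀ
          (fromBlocks W⁻¹ 0 0 Gw))
        (fromRows (fromBlocks Zhat Zhat 0 0) 0)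
        (fromRows (fromBlocks Zhat Zhat 0 0) 0)ᵀ
        (fromBlocks V⁻¹ 0 0 Gv)).PosDef)
    ↔
    ((Ebar - E).PosDef ∧
      (E - ((A - Bhat * C) * E * (A - Bhat * C)ᵀ + D * W * Dᵀ + B * Gw⁻¹ * Bᵀ
        + Bhat * V * Bhatᵀ + Bhat * Gv⁻¹ * Bhatᵀ)).PosDef) := by
  have hYdet : IsUnit Yhat.det := isUnit_iff_isUnit_det Yhat |>.mp hYhat.isUnit
  have hYt : Yhatᵀ = Yhat := by
    have h := hYhat.1.eq
    rwa [conjTranspose_eq_transpose_of_trivial] at h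
  have hZ : Yhat * Bhat = Zhat := by
    rw [hBhatdef, ← Matrix.mul_assoc, mul_nonsing_inv _ hYdet, Matrix.one_mul]
  -- First conjunct
  have iff1 : (fromBlocks Ebar 1 1 Yhat).PosDef ↔ (Ebar - E).PosDef := by
    have h1 : (fromBlocks Ebar 1 1 Yhat) =
        fromBlocks Ebar 1 (1 : Matrix (Fin n) (Fin n) ℝ)ᵀ Yhat := by rw [transpose_one]
    rw [h1, posDef_fromBlocks₂₂' _ _ hYhat, hEdef]
    simp
  -- Second conjunct
  have hVGv : (fromBlocks V⁻¹ 0 0 Gv).PosDef := posDef_fromBlocks_diag hV.inv hGv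
  have hWGw : (fromBlocks W⁻¹ 0 0 Gw).PosDef := posDef_fromBlocks_diag hW.inv hGw
  set G : Matrix (Fin n) (Fin n) ℝ := Yhat * A - Zhat * C with hGdef
  set T : Matrix (Fin n ⊕ Fin n) (Fin p ⊕ Fin p) ℝ := fromBlocks Zhat Zhat 0 0 with hTdef
  set F : Matrix (Fin n ⊕ Fin n) (Fin d ⊕ Fin m) ℝ := fromBlocks (Yhat * D) (Yhat * B) 0 0
    with hFdef
  clear_value G T F
  -- Schur step 1
  have hinvVGv : (fromBlocks V⁻¹ 0 0 Gv)⁻¹ = fromBlocks V 0 0 Gv⁻¹ := by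
    rw [inv_fromBlocks_diag hV.inv.isUnit hGv.isUnit, nonsing_inv_nonsing_inv V
      (isUnit_iff_isUnit_det V |>.mp hV.isUnit)]
  have hinvWGw : (fromBlocks W⁻¹ 0 0 Gw)⁻¹ = fromBlocks W 0 0 Gw⁻¹ := by
    rw [inv_fromBlocks_diag hW.inv.isUnit hGw.isUnit, nonsing_inv_nonsing_inv W
      (isUnit_iff_isUnit_det W |>.mp hW.isUnit)]
  set K : Matrix (Fin n ⊕ Fin n) (Fin n ⊕ Fin n) ℝ := fromBlocks Yhat G Gᵀ Yhat with hKdef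
  set Q : Matrix (Fin n) (Fin n) ℝ :=
    Zhat * V * Zhatᵀ + Zhat * Gv⁻¹ * Zhatᵀ + Yhat * D * W * (Yhat * D)ᵀ
      + Yhat * B * Gw⁻¹ * (Yhat * B)ᵀ with hQdef
  clear_value K Q
  have step1 :
      (fromBlocks (fromBlocks K F Fᵀ (fromBlocks W⁻¹ 0 0 Gw))
        (fromRows T 0) (fromRows T 0)ᵀ (fromBlocks V⁻¹ 0 0 Gv)).PosDef
      ↔ (fromBlocks (Yhat - Q) G Gᵀ Yhat).PosDef := by
    rw [posDef_fromBlocks₂₂' _ _ hVGv, hinvVGv]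
    have hR : fromRows T (0 : Matrix (Fin d ⊕ Fin m) (Fin p ⊕ Fin p) ℝ) *
        fromBlocks V 0 0 Gv⁻¹ * (fromRows T (0 : Matrix (Fin d ⊕ Fin m) (Fin p ⊕ Fin p) ℝ))ᵀ =
        fromBlocks (fromBlocks (Zhat * V * Zhatᵀ + Zhat * Gv⁻¹ * Zhatᵀ) 0 0 0) 0 0 0 := by
      rw [transpose_fromRows, fromRows_mul, fromRows_mul_fromCols]
      simp [hTdef, fromBlocks_multiply, fromBlocks_transpose, Matrix.mul_assoc]
    rw [hR]
    have hsub : fromBlocks K F Fᵀ (fromBlocks W⁻¹ 0 0 Gw) -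
        fromBlocks (fromBlocks (Zhat * V * Zhatᵀ + Zhat * Gv⁻¹ * Zhatᵀ) 0 0 0) 0 0 0 =
        fromBlocks (K - fromBlocks (Zhat * V * Zhatᵀ + Zhat * Gv⁻¹ * Zhatᵀ) 0 0 0) F Fᵀ
          (fromBlocks W⁻¹ 0 0 Gw) := by
      ext (i | i) (j | j) <;> simp [fromBlocks]
    rw [hsub, posDef_fromBlocks₂₂' _ _ hWGw, hinvWGw]
    have hF : F * fromBlocks W 0 0 Gw⁻¹ * Fᵀ =
        fromBlocks (Yhat * D * W * (Yhat * D)ᵀ + Yhat * B * Gw⁻¹ * (Yhat * B)ᵀ) 0 0 0 := by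
      simp [hFdef, fromBlocks_multiply, fromBlocks_transpose, Matrix.mul_assoc]
    rw [hF]
    have heq : K - fromBlocks (Zhat * V * Zhatᵀ + Zhat * Gv⁻¹ * Zhatᵀ) 0 0 0 -
        fromBlocks (Yhat * D * W * (Yhat * D)ᵀ + Yhat * B * Gw⁻¹ * (Yhat * B)ᵀ) 0 0 0 =
        fromBlocks (Yhat - Q) G Gᵀ Yhat := by
      ext (i | i) (j | j) <;> simp [hKdef, hQdef, fromBlocks] <;> ring
    rw [heq]
  -- Schur step 3 and congruence
  set X : Matrix (Fin n) (Fin n) ℝ :=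
    (A - Bhat * C) * E * (A - Bhat * C)ᵀ + D * W * Dᵀ + B * Gw⁻¹ * Bᵀ
      + Bhat * V * Bhatᵀ + Bhat * Gv⁻¹ * Bhatᵀ with hXdef
  clear_value X
  have step2 : (fromBlocks (Yhat - Q) G Gᵀ Yhat).PosDef ↔ (E - X).PosDef := by
    rw [posDef_fromBlocks₂₂' _ _ hYhat]
    have hcongr : Yhat - Q - G * Yhat⁻¹ * Gᵀ = Yhat * (E - X) * Yhatᵀ := by
      have hGY : G = Yhat * (A - Bhat * C) := by
        rw [hGdef, Matrix.mul_sub, ← Matrix.mul_assoc, hZ]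
      have hYE : Yhat * E * Yhat = Yhat := by
        rw [hEdef, mul_nonsing_inv _ hYdet, Matrix.one_mul]
      have key : Yhat * X * Yhat = G * Yhat⁻¹ * Gᵀ + Yhat * D * W * (Yhat * D)ᵀ
          + Yhat * B * Gw⁻¹ * (Yhat * B)ᵀ + Zhat * V * Zhatᵀ + Zhat * Gv⁻¹ * Zhatᵀ := by
        rw [hXdef, hGY, hEdef, ← hZ]
        simp only [Matrix.mul_add, Matrix.add_mul, transpose_mul, hYt, Matrix.mul_assoc]
      rw [hYt, Matrix.mul_sub, Matrix.sub_mul, hYE, key, hQdef]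
      abel
    rw [hcongr, posDef_mul_mul_transpose_iff hYhat.isUnit]
  rw [iff1, step1, step2]
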